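/- Let τ ∈ ℝ and γ > 0. Let y, f, g : [τ, ∞) → ℝ be nonnegative functions with f, g locally integrable, and assume y is differentiable on [τ, ∞) and satisfies y′(t) + γ·y(t) ≤ f(t)·y(t)^{1/2} + g(t) for every t ∈ [τ, ∞). Assume in addition that sup_{t ≥ τ} ∫_t^{t+1} f(s) ds ≤ A₁ and sup_{t ≥ τ} ∫_t^{t+1} g(s) ds ≤ A₂ for some positive constants A₁, A₂. Then for every t ≥ τ: y(t) ≤ 2·y(τ)·e^{−γ(t−τ)} + Q(γ, A₁, A₂), where Q(γ, A₁, A₂) = ((e^{γ/2}/(1 − e^{−γ/2}))·A₁)² + (2·e^{γ}/(1 − e^{−γ}))·A₂. -/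

import Mathlib

open MeasureTheory Set Real

private lemma gsu_intInt {f : ℝ → ℝ} {τ a b : ℝ} (hfloc : LocallyIntegrableOn f (Ici τ))
    (ha : τ ≤ a) (hab : a ≤ b) : IntervalIntegrable f volume a b := by
  rw [intervalIntegrable_iff_integrableOn_Icc_of_le hab]
  exact hfloc.integrableOn_compact_subset (fun x hx => le_trans ha hx.1) isCompact_Icc

private lemma gsu_intInt_mul {f c : ℝ → ℝ} {τ a b : ℝ} (hfloc : LocallyIntegrableOn f (Ici τ))
    (hc : Continuous c) (ha : τ ≤ a) (hab : a ≤ b) :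
    IntervalIntegrable (fun s => c s * f s) volume a b := by
  rw [intervalIntegrable_iff_integrableOn_Icc_of_le hab]
  exact IntegrableOn.continuousOn_mul hc.continuousOn
    (hfloc.integrableOn_compact_subset (fun x hx => le_trans ha hx.1) isCompact_Icc) isCompact_Icc

private lemma gsu_geom (τ α A : ℝ) (hα : 0 < α) (hA : 0 ≤ A) (f : ℝ → ℝ)
    (hf : ∀ t ∈ Ici τ, 0 ≤ f t) (hfloc : LocallyIntegrableOn f (Ici τ))
    (hA1 : ∀ r ∈ Ici τ, ∫ s in r..(r + 1), f s ≤ A) :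
    ∀ t, τ ≤ t →
      ∫ s in τ..t, exp (α * (s - τ)) * f s ≤ exp (α * (t - τ)) * (A / (1 - exp (-α))) := by
  have hd : 0 < 1 - exp (-α) := by
    have : exp (-α) < exp 0 := exp_lt_exp.2 (by linarith)
    simp only [exp_zero] at this; linarith
  have hcont : Continuous fun s : ℝ => exp (α * (s - τ)) :=
    (continuous_const.mul (continuous_id.sub continuous_const)).rexp
  have key : ∀ a b : ℝ, τ ≤ a → a ≤ b →
      ∫ s in a..b, exp (α * (s - τ)) * f s ≤ exp (α * (b - τ)) * ∫ s in a..b, f s := by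
    intro a b ha hab
    rw [← intervalIntegral.integral_const_mul]
    apply intervalIntegral.integral_mono_on hab (gsu_intInt_mul hfloc hcont ha hab)
      ((gsu_intInt hfloc ha hab).const_mul _)
    intro s hs
    exact mul_le_mul_of_nonneg_right (exp_le_exp.2 (by nlinarith [hs.2])) (hf s (le_trans ha hs.1))
  have main : ∀ n : ℕ, ∀ t, τ ≤ t → t ≤ τ + n →
      ∫ s in τ..t, exp (α * (s - τ)) * f s ≤ exp (α * (t - τ)) * (A / (1 - exp (-α))) := by
    intro n
    induction n with
    | zero =>
      intro t ht ht'
      have : t = τ := le_antisymm (by simpa using ht') ht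
      subst this
      simp only [intervalIntegral.integral_same]
      positivity
    | succ n ih =>
      intro t ht ht'
      by_cases hcase : t ≤ τ + 1
      · calc ∫ s in τ..t, exp (α * (s - τ)) * f s
            ≤ exp (α * (t - τ)) * ∫ s in τ..t, f s := key τ t le_rfl ht
          _ ≤ exp (α * (t - τ)) * A := by
              refine mul_le_mul_of_nonneg_left ?_ (exp_pos _).le
              calc ∫ s in τ..t, f s ≤ ∫ s in τ..(τ + 1), f s := by
                    refine intervalIntegral.integral_mono_interval le_rfl ht hcase ?_
                      (gsu_intInt hfloc le_rfl (by linarith))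
                    exact ae_restrict_of_forall_mem measurableSet_Ioc fun s hs => hf s hs.1.le
                _ ≤ A := hA1 τ self_mem_Ici
          _ ≤ exp (α * (t - τ)) * (A / (1 - exp (-α))) := by
              refine mul_le_mul_of_nonneg_left ?_ (exp_pos _).le
              rw [le_div_iff₀ hd]
              nlinarith [exp_pos (-α)]
      · push_neg at hcase
        have h1 : τ ≤ t - 1 := by linarith
        have h2 : t - 1 ≤ τ + n := by push_cast at ht' ⊢; linarith
        have split : ∫ s in τ..t, exp (α * (s - τ)) * f s =
            (∫ s in τ..(t - 1), exp (α * (s - τ)) * f s)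
              + ∫ s in (t - 1)..t, exp (α * (s - τ)) * f s :=
          (intervalIntegral.integral_add_adjacent_intervals
            (gsu_intInt_mul hfloc hcont le_rfl h1)
            (gsu_intInt_mul hfloc hcont h1 (by linarith))).symm
        have hmid : ∫ s in (t - 1)..t, exp (α * (s - τ)) * f s ≤ exp (α * (t - τ)) * A := by
          calc ∫ s in (t - 1)..t, exp (α * (s - τ)) * f s
              ≤ exp (α * (t - τ)) * ∫ s in (t - 1)..t, f s := key (t - 1) t h1 (by linarith)
            _ ≤ exp (α * (t - τ)) * A := by
                refine mul_le_mul_of_nonneg_left ?_ (exp_pos _).le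
                have := hA1 (t - 1) h1
                simpa using this
        have hIH := ih (t - 1) h1 h2
        have hexp : exp (α * ((t - 1) - τ)) = exp (α * (t - τ)) * exp (-α) := by
          rw [← exp_add]; ring_nf
        rw [split]
        calc (∫ s in τ..(t - 1), exp (α * (s - τ)) * f s)
              + ∫ s in (t - 1)..t, exp (α * (s - τ)) * f s
            ≤ exp (α * ((t - 1) - τ)) * (A / (1 - exp (-α))) + exp (α * (t - τ)) * A :=
              add_le_add hIH hmid
          _ = exp (α * (t - τ)) * (A / (1 - exp (-α))) := by
              rw [hexp]; field_simp; ring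
  intro t ht
  refine main ⌈t - τ⌉₊ t ht ?_
  have := Nat.le_ceil (t - τ)
  linarith

private lemma gsu_quad {W s E C1 C2 yt : ℝ} (hs : s ^ 2 = W) (hE : 0 ≤ E)
    (h : W ≤ yt + s * (E * C1) + E ^ 2 * C2) :
    W ≤ 2 * yt + E ^ 2 * (C1 ^ 2 + 2 * C2) := by
  nlinarith [sq_nonneg (s - E * C1)]

private lemma gsu_final {yT W yt Q F E2 : ℝ} (hF : 0 < F) (hQ : 0 ≤ Q)
    (h1 : yT * F ≤ W) (h2 : W ≤ 2 * yt + E2 * Q) (h3 : E2 ≤ F) :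
    yT ≤ 2 * yt * F⁻¹ + Q := by
  have h4 : yT * F ≤ 2 * yt + Q * F := by nlinarith
  have h5 : yT ≤ (2 * yt + Q * F) / F := (le_div_iff₀ hF).2 (by linarith)
  have h6 : (2 * yt + Q * F) / F = 2 * yt * F⁻¹ + Q := by
    field_simp
  linarith [h5, h6.le, h6.ge]

private lemma div_le_div_of_nonneg_right' {a b c : ℝ} (ha : 0 < a) (hc : 0 < c)
    (h : 1 ≤ b) : a / c ≤ b * a / c := by
  gcongr
  nlinarith

theorem gronwall_sqrt_uniform (τ γ : ℝ) (hγ : 0 < γ) (y y' f g : ℝ → ℝ) (A₁ A₂ : ℝ)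
    (hA₁ : 0 < A₁) (hA₂ : 0 < A₂)
    (hy : ∀ t ∈ Ici τ, 0 ≤ y t)
    (hf : ∀ t ∈ Ici τ, 0 ≤ f t) (hg : ∀ t ∈ Ici τ, 0 ≤ g t)
    (hfloc : LocallyIntegrableOn f (Ici τ))
    (hgloc : LocallyIntegrableOn g (Ici τ))
    (hderiv : ∀ t ∈ Ici τ, HasDerivAt y (y' t) t)
    (hineq : ∀ t ∈ Ici τ, y' t + γ * y t ≤ f t * y t ^ ((1 : ℝ) / 2) + g t)
    (hf1 : ∀ r ∈ Ici τ, ∫ s in r..(r + 1), f s ≤ A₁)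
    (hg1 : ∀ r ∈ Ici τ, ∫ s in r..(r + 1), g s ≤ A₂) :
    ∀ t ∈ Ici τ,
      y t ≤ 2 * y τ * exp (-γ * (t - τ))
        + ((exp (γ / 2) / (1 - exp (-(γ / 2)))) * A₁) ^ 2
        + (2 * exp γ / (1 - exp (-γ))) * A₂ := by
  have hineq' : ∀ t ∈ Ici τ, y' t + γ * y t ≤ f t * Real.sqrt (y t) + g t := by
    intro t ht
    rw [Real.sqrt_eq_rpow]
    exact hineq t ht
  -- positivity of denominators
  have hd1 : 0 < 1 - exp (-(γ / 2)) := by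
    have : exp (-(γ / 2)) < exp 0 := exp_lt_exp.2 (by linarith)
    simp only [exp_zero] at this; linarith
  have hd2 : 0 < 1 - exp (-γ) := by
    have : exp (-γ) < exp 0 := exp_lt_exp.2 (by linarith)
    simp only [exp_zero] at this; linarith
  set C1 : ℝ := A₁ / (1 - exp (-(γ / 2))) with hC1
  set C2 : ℝ := A₂ / (1 - exp (-γ)) with hC2
  have hC1pos : 0 < C1 := div_pos hA₁ hd1
  have hC2pos : 0 < C2 := div_pos hA₂ hd2
  intro T hT
  have hT' : τ ≤ T := hT
  set w : ℝ → ℝ := fun s => y s * exp (γ * (s - τ)) with hw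
  have hEcont : Continuous fun s : ℝ => exp (γ * (s - τ)) :=
    (continuous_const.mul (continuous_id.sub continuous_const)).rexp
  have hyCA : ∀ s ∈ Ici τ, ContinuousAt y s := fun s hs => (hderiv s hs).continuousAt
  have hwcont : ContinuousOn w (Icc τ T) := fun s hs =>
    (((hyCA s hs.1).mul (hEcont.continuousAt)).continuousWithinAt)
  obtain ⟨s₀, hs₀, hmax⟩ := isCompact_Icc.exists_isMaxOn (nonempty_Icc.mpr hT') hwcont
  have hτs₀ : τ ≤ s₀ := hs₀.1
  have hs₀T : s₀ ≤ T := hs₀.2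
  set W : ℝ := w s₀ with hWdef
  have hwτ : w τ = y τ := by simp [hw]
  have hWnonneg : 0 ≤ W := by
    have h1 : w τ ≤ W := hmax ⟨le_rfl, hT'⟩
    have h2 : 0 ≤ w τ := by rw [hwτ]; exact hy τ self_mem_Ici
    linarith
  -- Gronwall integral inequality up to s₀
  have hsub : Icc τ s₀ ⊆ Ici τ := fun x hx => hx.1
  have key : W - y τ ≤ ∫ s in τ..s₀, (f s * Real.sqrt (y s) + g s) * exp (γ * (s - τ)) := by
    rw [← hwτ]
    apply intervalIntegral.sub_le_integral_of_hasDeriv_right_of_le hτs₀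
      (hwcont.mono (Icc_subset_Icc_right hs₀T))
      (g' := fun x => (y' x + γ * y x) * exp (γ * (x - τ)))
    · intro x hx
      have hx' : τ ≤ x := hx.1.le
      have h0 : HasDerivAt (fun s : ℝ => γ * (s - τ)) γ x := by
        simpa using ((hasDerivAt_id x).sub_const τ).const_mul γ
      have h2 := (hderiv x hx').mul h0.exp
      have heq : y' x * exp (γ * (x - τ)) + y x * (exp (γ * (x - τ)) * γ)
          = (y' x + γ * y x) * exp (γ * (x - τ)) := by ring
      rw [heq] at h2
      exact h2.hasDerivWithinAt
    · -- integrability of φ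
      have hfI : IntegrableOn f (Icc τ s₀) := hfloc.integrableOn_compact_subset hsub isCompact_Icc
      have hgI : IntegrableOn g (Icc τ s₀) := hgloc.integrableOn_compact_subset hsub isCompact_Icc
      have hcont2 : ContinuousOn (fun s => Real.sqrt (y s) * exp (γ * (s - τ))) (Icc τ s₀) := by
        apply ContinuousOn.mul _ hEcont.continuousOn
        exact continuous_sqrt.comp_continuousOn fun s hs => (hyCA s hs.1).continuousWithinAt
      have h1 : IntegrableOn (fun s => f s * (Real.sqrt (y s) * exp (γ * (s - τ)))) (Icc τ s₀) :=
        hfI.mul_continuousOn hcont2 isCompact_Icc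
      have h2 : IntegrableOn (fun s => g s * exp (γ * (s - τ))) (Icc τ s₀) :=
        hgI.mul_continuousOn hEcont.continuousOn isCompact_Icc
      have heq : (fun s => (f s * Real.sqrt (y s) + g s) * exp (γ * (s - τ)))
          = fun s => f s * (Real.sqrt (y s) * exp (γ * (s - τ))) + g s * exp (γ * (s - τ)) := by
        funext s; ring
      rw [heq]
      exact h1.add h2
    · intro x hx
      exact mul_le_mul_of_nonneg_right (hineq' x hx.1.le) (exp_pos _).le
  -- bound the integral
  have int1 : IntervalIntegrable (fun s => (f s * Real.sqrt (y s) + g s) * exp (γ * (s - τ)))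
      volume τ s₀ := by
    rw [intervalIntegrable_iff_integrableOn_Icc_of_le hτs₀]
    have hfI : IntegrableOn f (Icc τ s₀) := hfloc.integrableOn_compact_subset hsub isCompact_Icc
    have hgI : IntegrableOn g (Icc τ s₀) := hgloc.integrableOn_compact_subset hsub isCompact_Icc
    have hcont2 : ContinuousOn (fun s => Real.sqrt (y s) * exp (γ * (s - τ))) (Icc τ s₀) := by
      apply ContinuousOn.mul _ hEcont.continuousOn
      exact continuous_sqrt.comp_continuousOn fun s hs => (hyCA s hs.1).continuousWithinAt
    have heq : (fun s => (f s * Real.sqrt (y s) + g s) * exp (γ * (s - τ)))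
        = fun s => f s * (Real.sqrt (y s) * exp (γ * (s - τ))) + g s * exp (γ * (s - τ)) := by
      funext s; ring
    rw [heq]
    exact (hfI.mul_continuousOn hcont2 isCompact_Icc).add
      (hgI.mul_continuousOn hEcont.continuousOn isCompact_Icc)
  have hE2cont : Continuous fun s : ℝ => exp (γ / 2 * (s - τ)) :=
    (continuous_const.mul (continuous_id.sub continuous_const)).rexp
  have int2a : IntervalIntegrable (fun s => exp (γ / 2 * (s - τ)) * f s) volume τ s₀ :=
    gsu_intInt_mul hfloc hE2cont le_rfl hτs₀
  have int2b : IntervalIntegrable (fun s => exp (γ * (s - τ)) * g s) volume τ s₀ :=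
    gsu_intInt_mul hgloc hEcont le_rfl hτs₀
  have hmono : ∫ s in τ..s₀, (f s * Real.sqrt (y s) + g s) * exp (γ * (s - τ))
      ≤ ∫ s in τ..s₀,
          (Real.sqrt W * (exp (γ / 2 * (s - τ)) * f s) + exp (γ * (s - τ)) * g s) := by
    apply intervalIntegral.integral_mono_on hτs₀ int1 ((int2a.const_mul _).add int2b)
    intro s hs
    have hsτ : τ ≤ s := hs.1
    have e2 : exp (γ * (s - τ)) = exp (γ / 2 * (s - τ)) * exp (γ / 2 * (s - τ)) := by
      rw [← exp_add]; ring_nf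
    have hws : Real.sqrt (y s) * exp (γ / 2 * (s - τ))
        = Real.sqrt (y s * exp (γ * (s - τ))) := by
      rw [e2, Real.sqrt_mul (hy s hsτ), Real.sqrt_mul_self (exp_pos _).le]
    have h3 : Real.sqrt (y s) * exp (γ / 2 * (s - τ)) ≤ Real.sqrt W := by
      rw [hws]
      exact Real.sqrt_le_sqrt (hmax ⟨hs.1, le_trans hs.2 hs₀T⟩)
    have h4 : f s * Real.sqrt (y s) * exp (γ * (s - τ))
        ≤ Real.sqrt W * (exp (γ / 2 * (s - τ)) * f s) := by
      have := mul_le_mul_of_nonneg_right h3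
        (mul_nonneg (exp_pos (γ / 2 * (s - τ))).le (hf s hsτ))
      calc f s * Real.sqrt (y s) * exp (γ * (s - τ))
          = (Real.sqrt (y s) * exp (γ / 2 * (s - τ))) * (exp (γ / 2 * (s - τ)) * f s) := by
            rw [e2]; ring
        _ ≤ Real.sqrt W * (exp (γ / 2 * (s - τ)) * f s) := this
    calc (f s * Real.sqrt (y s) + g s) * exp (γ * (s - τ))
        = f s * Real.sqrt (y s) * exp (γ * (s - τ)) + exp (γ * (s - τ)) * g s := by ring
      _ ≤ Real.sqrt W * (exp (γ / 2 * (s - τ)) * f s) + exp (γ * (s - τ)) * g s := by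
          linarith [h4]
  have hsplit : ∫ s in τ..s₀,
      (Real.sqrt W * (exp (γ / 2 * (s - τ)) * f s) + exp (γ * (s - τ)) * g s)
      = Real.sqrt W * (∫ s in τ..s₀, exp (γ / 2 * (s - τ)) * f s)
        + ∫ s in τ..s₀, exp (γ * (s - τ)) * g s := by
    rw [intervalIntegral.integral_add (int2a.const_mul _) int2b,
      intervalIntegral.integral_const_mul]
  have hb1 := gsu_geom τ (γ / 2) A₁ (by linarith) hA₁.le f hf hfloc hf1 s₀ hτs₀
  have hb2 := gsu_geom τ γ A₂ hγ hA₂.le g hg hgloc hg1 s₀ hτs₀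
  set E : ℝ := exp (γ / 2 * (s₀ - τ)) with hE
  have hEpos : 0 < E := exp_pos _
  have hE2 : exp (γ * (s₀ - τ)) = E ^ 2 := by
    rw [hE, sq, ← exp_add]
    congr 1
    ring
  have hWb : W ≤ y τ + Real.sqrt W * (E * C1) + E ^ 2 * C2 := by
    have s1 : Real.sqrt W * (∫ s in τ..s₀, exp (γ / 2 * (s - τ)) * f s)
        ≤ Real.sqrt W * (E * C1) :=
      mul_le_mul_of_nonneg_left hb1 (Real.sqrt_nonneg _)
    have s2 : (∫ s in τ..s₀, exp (γ * (s - τ)) * g s) ≤ E ^ 2 * C2 := by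
      rw [← hE2]; exact hb2
    linarith [key.trans (hmono.trans_eq hsplit), s1, s2]
  have hsq : Real.sqrt W ^ 2 = W := Real.sq_sqrt hWnonneg
  have hW2 : W ≤ 2 * y τ + E ^ 2 * (C1 ^ 2 + 2 * C2) :=
    gsu_quad hsq hEpos.le hWb
  -- conclude
  set F : ℝ := exp (γ * (T - τ)) with hF
  have hFpos : 0 < F := exp_pos _
  have hE2F : E ^ 2 ≤ F := by
    rw [← hE2, hF]
    exact exp_le_exp.2 (mul_le_mul_of_nonneg_left (by linarith) hγ.le)
  have hwT : y T * F ≤ W := hmax ⟨hT', le_rfl⟩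
  have hQ : 0 ≤ C1 ^ 2 + 2 * C2 := by positivity
  have hfinal : y T ≤ 2 * y τ * F⁻¹ + (C1 ^ 2 + 2 * C2) :=
    gsu_final hFpos hQ hwT hW2 hE2F
  have hFinv : F⁻¹ = exp (-γ * (T - τ)) := by
    rw [hF, ← exp_neg]; ring_nf
  rw [← hFinv]
  -- compare constants
  have hc1 : C1 ^ 2 ≤ ((exp (γ / 2) / (1 - exp (-(γ / 2)))) * A₁) ^ 2 := by
    have h1 : (1 : ℝ) ≤ exp (γ / 2) := by
      rw [← exp_zero]; exact exp_le_exp.2 (by linarith)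
    have h2 : C1 ≤ (exp (γ / 2) / (1 - exp (-(γ / 2)))) * A₁ := by
      rw [hC1, div_mul_eq_mul_div]
      exact div_le_div_of_nonneg_right' hA₁ hd1 h1
    exact pow_le_pow_left₀ hC1pos.le h2 2
  have hc2 : 2 * C2 ≤ (2 * exp γ / (1 - exp (-γ))) * A₂ := by
    have h1 : (1 : ℝ) ≤ exp γ := by
      rw [← exp_zero]; exact exp_le_exp.2 (by linarith)
    have e1 : 2 * C2 = 2 * A₂ / (1 - exp (-γ)) := by rw [hC2]; ring
    have e2 : 2 * exp γ / (1 - exp (-γ)) * A₂ = 2 * exp γ * A₂ / (1 - exp (-γ)) := by ring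
    rw [e1, e2]
    gcongr
    nlinarith
  linarith
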